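/- For all i ∈ {1,…,K} and j ∈ {1,…,J}: 4·Re[⟨Qφ_i, Qθ_j⟩ − ⟨Qφ_i, ψ(θ,φ)⟩⟨ψ(θ,φ), Qθ_j⟩] = i·Tr[[Φ_{θ/2}(G_j), Ψ_φ†(H_i)] ρ(θ)] (an equality of complex numbers; both sides are real); that is, the Wigner–Yanase information matrix elements of the evolved quantum Boltzmann machine with respect to mixed θ and φ parameters are I^WY_{ij}(θ,φ) = i⟨[Φ_{θ/2}(G_j), Ψ_φ†(H_i)]⟩_{ρ(θ)}. -/

import Mathlib

open MeasureTheory Matrix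
open scoped Kronecker

noncomputable section

attribute [local instance] Matrix.normedAddCommGroup Matrix.normedSpace

/-- Square complex matrices. -/
abbrev Mat (n : ℕ) := Matrix (Fin n) (Fin n) ℂ

/-- The parameterized Hamiltonian `G(θ) = ∑ j, θ j • G j`. -/
def Gm {n J : ℕ} (G : Fin J → Mat n) (θ : Fin J → ℝ) : Mat n := ∑ j, (θ j : ℂ) • G j

/-- The parameterized Hamiltonian `H(φ) = ∑ k, φ k • H k`. -/
def Hm {n K : ℕ} (H : Fin K → Mat n) (φ : Fin K → ℝ) : Mat n := ∑ k, (φ k : ℂ) • H k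

/-- The partition function `Z(θ) = Tr[exp (−G(θ))]` (a positive real). -/
def Zpf {n J : ℕ} (G : Fin J → Mat n) (θ : Fin J → ℝ) : ℝ :=
  (Matrix.trace (NormedSpace.exp (-(Gm G θ)))).re

/-- The quantum Boltzmann machine `ρ(θ) = exp(−G(θ))/Z(θ)`. -/
def qbm {n J : ℕ} (G : Fin J → Mat n) (θ : Fin J → ℝ) : Mat n :=
  ((Zpf G θ : ℂ))⁻¹ • NormedSpace.exp (-(Gm G θ))

/-- The unitary `exp(−i H(φ))`. -/
def uH {n K : ℕ} (H : Fin K → Mat n) (φ : Fin K → ℝ) : Mat n :=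
  NormedSpace.exp (-(Complex.I • Hm H φ))

/-- The unitary `exp(i H(φ))`. -/
def uH' {n K : ℕ} (H : Fin K → Mat n) (φ : Fin K → ℝ) : Mat n :=
  NormedSpace.exp (Complex.I • Hm H φ)

/-- The evolved quantum Boltzmann machine `ω(θ,φ) = exp(−iH(φ)) ρ(θ) exp(iH(φ))`. -/
def eqbm {n J K : ℕ} (G : Fin J → Mat n) (H : Fin K → Mat n)
    (θ : Fin J → ℝ) (φ : Fin K → ℝ) : Mat n :=
  uH H φ * qbm G θ * uH' H φ

/-- The high-peak-tent probability density `p(t) = (2/π) ln |coth (π t / 2)|`. -/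
def hpt (t : ℝ) : ℝ :=
  (2 / Real.pi) * Real.log |Real.cosh (Real.pi * t / 2) / Real.sinh (Real.pi * t / 2)|

/-- The channel `Φ_{θ/2}(X) = ∫ℝ p(t) exp(−iG(θ)t/2) X exp(iG(θ)t/2) dt`. -/
def chanΦhalf {n J : ℕ} (G : Fin J → Mat n) (θ : Fin J → ℝ) (X : Mat n) : Mat n :=
  ∫ t : ℝ, hpt t •
    (NormedSpace.exp ((-(Complex.I * (t : ℂ)) / 2) • Gm G θ) * X *
      NormedSpace.exp ((Complex.I * (t : ℂ) / 2) • Gm G θ))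

/-- The channel `Ψ_φ(X) = ∫₀¹ exp(−iH(φ)t) X exp(iH(φ)t) dt`. -/
def chanΨ {n K : ℕ} (H : Fin K → Mat n) (φ : Fin K → ℝ) (X : Mat n) : Mat n :=
  ∫ t in (0:ℝ)..1,
    (NormedSpace.exp ((-(Complex.I * (t : ℂ))) • Hm H φ) * X *
      NormedSpace.exp ((Complex.I * (t : ℂ)) • Hm H φ))

/-- The adjoint channel `Ψ_φ†(X) = ∫₀¹ exp(iH(φ)t) X exp(−iH(φ)t) dt`. -/
def chanΨdag {n K : ℕ} (H : Fin K → Mat n) (φ : Fin K → ℝ) (X : Mat n) : Mat n :=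
  ∫ t in (0:ℝ)..1,
    (NormedSpace.exp ((Complex.I * (t : ℂ)) • Hm H φ) * X *
      NormedSpace.exp ((-(Complex.I * (t : ℂ))) • Hm H φ))

/-- `√ρ(θ) = exp(−G(θ)/2)/√Z(θ)`. -/
def sqrtρ {n J : ℕ} (G : Fin J → Mat n) (θ : Fin J → ℝ) : Mat n :=
  ((Real.sqrt (Zpf G θ) : ℂ))⁻¹ • NormedSpace.exp (-((1 / 2 : ℂ) • Gm G θ))

/-- `√ω(θ,φ) = exp(−iH(φ)) √ρ(θ) exp(iH(φ))`. -/
def sqrtω {n J K : ℕ} (G : Fin J → Mat n) (H : Fin K → Mat n)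
    (θ : Fin J → ℝ) (φ : Fin K → ℝ) : Mat n :=
  uH H φ * sqrtρ G θ * uH' H φ

/-- The maximally entangled vector `Γ ∈ ℂ^{n²}`, `Γ_{(a,b)} = δ_{a,b}`. -/
def Γv (n : ℕ) : Fin n × Fin n → ℂ := fun ab => if ab.1 = ab.2 then 1 else 0

/-- The canonically purified evolved quantum Boltzmann machine `ψ(θ,φ) = (√ω(θ,φ) ⊗ I)Γ`. -/
def ψv {n J K : ℕ} (G : Fin J → Mat n) (H : Fin K → Mat n)
    (θ : Fin J → ℝ) (φ : Fin K → ℝ) : Fin n × Fin n → ℂ :=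
  (sqrtω G H θ φ ⊗ₖ (1 : Mat n)).mulVec (Γv n)

/-- The partial derivative of `ψ(θ,φ)` with respect to `θ_j`:
`Qθ_j = (1/2)⟨G_j⟩_{ρ(θ)} ψ(θ,φ) − (1/4)((exp(−iH(φ)) {Φ_{θ/2}(G_j), √ρ(θ)} exp(iH(φ))) ⊗ I)Γ`. -/
def Qθ {n J K : ℕ} (G : Fin J → Mat n) (H : Fin K → Mat n)
    (θ : Fin J → ℝ) (φ : Fin K → ℝ) (j : Fin J) : Fin n × Fin n → ℂ :=
  ((1 / 2 : ℂ) * Matrix.trace (G j * qbm G θ)) • ψv G H θ φ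
    - (1 / 4 : ℂ) •
        ((uH H φ * (chanΦhalf G θ (G j) * sqrtρ G θ + sqrtρ G θ * chanΦhalf G θ (G j)) *
            uH' H φ) ⊗ₖ (1 : Mat n)).mulVec (Γv n)

/-- The partial derivative of `ψ(θ,φ)` with respect to `φ_k`:
`Qφ_k = i(([√ω(θ,φ), Ψ_φ(H_k)]) ⊗ I)Γ`. -/
def Qφ {n J K : ℕ} (G : Fin J → Mat n) (H : Fin K → Mat n)
    (θ : Fin J → ℝ) (φ : Fin K → ℝ) (k : Fin K) : Fin n × Fin n → ℂ :=
  Complex.I •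
    ((sqrtω G H θ φ * chanΨ H φ (H k) - chanΨ H φ (H k) * sqrtω G H θ φ) ⊗ₖ (1 : Mat n)).mulVec
      (Γv n)

/-- `⟨x, y⟩ = ∑ m, conj (x m) * y m` on `ℂ^{n²}`. -/
def dotc2 {n : ℕ} (x y : Fin n × Fin n → ℂ) : ℂ := ∑ m, (starRingEnd ℂ) (x m) * y m

-- === aux infrastructure ===
def ctCLE (n : ℕ) : Mat n ≃L[ℝ] Mat n :=
{ toFun := fun A => Aᴴ
  invFun := fun A => Aᴴ
  map_add' := fun A B => Matrix.conjTranspose_add A B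
  map_smul' := fun r A => by simp [Matrix.conjTranspose_smul]
  left_inv := fun A => Matrix.conjTranspose_conjTranspose A
  right_inv := fun A => Matrix.conjTranspose_conjTranspose A
  continuous_toFun := Continuous.matrix_conjTranspose continuous_id
  continuous_invFun := Continuous.matrix_conjTranspose continuous_id }

def conjCLE {n : ℕ} (P Q P' Q' : Mat n) (h1 : P' * P = 1) (h2 : P * P' = 1)
    (h3 : Q * Q' = 1) (h4 : Q' * Q = 1) : Mat n ≃L[ℂ] Mat n :=
{ toFun := fun X => P * X * Q
  invFun := fun X => P' * X * Q'
  map_add' := fun A B => by noncomm_ring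
  map_smul' := fun c A => by simp [Matrix.mul_smul, Matrix.smul_mul]
  left_inv := fun A => by
    simp only [mul_assoc, ← mul_assoc Q Q', h3]
    simp only [← mul_assoc, h1]
    simp
  right_inv := fun A => by
    simp only [mul_assoc, ← mul_assoc Q' Q, h4]
    simp only [← mul_assoc, h2]
    simp
  continuous_toFun := (continuous_const.matrix_mul continuous_id).matrix_mul continuous_const
  continuous_invFun := (continuous_const.matrix_mul continuous_id).matrix_mul continuous_const }

lemma conjTranspose_integral {n : ℕ} (f : ℝ → Mat n) :
    (∫ t, f t)ᴴ = ∫ t, (f t)ᴴ := ((ctCLE n).integral_comp_comm f).symm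

lemma conjTranspose_intervalIntegral {n : ℕ} (f : ℝ → Mat n) :
    (∫ t in (0:ℝ)..1, f t)ᴴ = ∫ t in (0:ℝ)..1, (f t)ᴴ := by
  rw [intervalIntegral.integral_of_le (by norm_num : (0:ℝ) ≤ 1),
      intervalIntegral.integral_of_le (by norm_num : (0:ℝ) ≤ 1)]
  exact ((ctCLE n).integral_comp_comm f).symm

lemma mul_intervalIntegral_mul {n : ℕ} (P Q P' Q' : Mat n) (h1 : P' * P = 1) (h2 : P * P' = 1)
    (h3 : Q * Q' = 1) (h4 : Q' * Q = 1) (f : ℝ → Mat n) :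
    P * (∫ t in (0:ℝ)..1, f t) * Q = ∫ t in (0:ℝ)..1, P * f t * Q := by
  rw [intervalIntegral.integral_of_le (by norm_num : (0:ℝ) ≤ 1),
      intervalIntegral.integral_of_le (by norm_num : (0:ℝ) ≤ 1)]
  exact ((conjCLE P Q P' Q' h1 h2 h3 h4).integral_comp_comm f).symm

lemma exp_smul_ct {n : ℕ} (c : ℂ) (M : Mat n) (hM : M.IsHermitian) :
    (NormedSpace.exp (c • M))ᴴ = NormedSpace.exp ((starRingEnd ℂ) c • M) := by
  rw [← Matrix.exp_conjTranspose, Matrix.conjTranspose_smul, hM.eq]; rfl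

lemma herm_lin {n L : ℕ} (M : Fin L → Mat n) (hM : ∀ l, (M l).IsHermitian) (c : Fin L → ℝ) :
    (∑ l, (c l : ℂ) • M l).IsHermitian := by
  unfold Matrix.IsHermitian
  rw [Matrix.conjTranspose_sum]
  refine Finset.sum_congr rfl fun l _ => ?_
  rw [Matrix.conjTranspose_smul, (hM l).eq]
  simp

-- hermiticity of chanΦhalf
lemma herm_chanΦ {n J : ℕ} (G : Fin J → Mat n) (θ : Fin J → ℝ) (X : Mat n)
    (hGm : (Gm G θ).IsHermitian) (hX : X.IsHermitian) :
    (chanΦhalf G θ X)ᴴ = chanΦhalf G θ X := by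
  rw [chanΦhalf, conjTranspose_integral]
  congr 1
  funext t
  rw [Matrix.conjTranspose_smul, star_trivial, Matrix.conjTranspose_mul,
    Matrix.conjTranspose_mul, exp_smul_ct _ _ hGm, exp_smul_ct _ _ hGm, hX.eq]
  have c1 : (starRingEnd ℂ) (Complex.I * (t:ℂ) / 2) = -(Complex.I * (t:ℂ)) / 2 := by
    simp [Complex.conj_ofReal, map_ofNat]
  have c2 : (starRingEnd ℂ) (-(Complex.I * (t:ℂ)) / 2) = Complex.I * (t:ℂ) / 2 := by
    simp [Complex.conj_ofReal, map_ofNat]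
  rw [c1, c2, mul_assoc]

lemma herm_chanΨdag {n K : ℕ} (H : Fin K → Mat n) (φ : Fin K → ℝ) (X : Mat n)
    (hHm : (Hm H φ).IsHermitian) (hX : X.IsHermitian) :
    (chanΨdag H φ X)ᴴ = chanΨdag H φ X := by
  rw [chanΨdag, conjTranspose_intervalIntegral]
  congr 1
  funext t
  rw [Matrix.conjTranspose_mul, Matrix.conjTranspose_mul,
    exp_smul_ct _ _ hHm, exp_smul_ct _ _ hHm, hX.eq]
  have c1 : (starRingEnd ℂ) (Complex.I * (t:ℂ)) = -(Complex.I * (t:ℂ)) := by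
    simp [Complex.conj_ofReal]
  have c2 : (starRingEnd ℂ) (-(Complex.I * (t:ℂ))) = Complex.I * (t:ℂ) := by
    simp [Complex.conj_ofReal]
  rw [c1, c2, mul_assoc]

lemma herm_chanΨ {n K : ℕ} (H : Fin K → Mat n) (φ : Fin K → ℝ) (X : Mat n)
    (hHm : (Hm H φ).IsHermitian) (hX : X.IsHermitian) :
    (chanΨ H φ X)ᴴ = chanΨ H φ X := by
  rw [chanΨ, conjTranspose_intervalIntegral]
  congr 1
  funext t
  rw [Matrix.conjTranspose_mul, Matrix.conjTranspose_mul,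
    exp_smul_ct _ _ hHm, exp_smul_ct _ _ hHm, hX.eq]
  have c1 : (starRingEnd ℂ) (Complex.I * (t:ℂ)) = -(Complex.I * (t:ℂ)) := by
    simp [Complex.conj_ofReal]
  have c2 : (starRingEnd ℂ) (-(Complex.I * (t:ℂ))) = Complex.I * (t:ℂ) := by
    simp [Complex.conj_ofReal]
  rw [c1, c2, mul_assoc]

lemma vecΓ {n : ℕ} (A : Mat n) :
    (A ⊗ₖ (1 : Mat n)).mulVec (Γv n) = fun ab => A ab.1 ab.2 := by
  funext ⟨a, b⟩
  simp [Matrix.mulVec, dotProduct, Γv, Fintype.sum_prod_type, Matrix.one_apply,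
    mul_ite, ite_and]

lemma dot_eq_trace {n : ℕ} (A B : Mat n) :
    dotc2 (fun ab => A ab.1 ab.2) (fun ab => B ab.1 ab.2) = Matrix.trace (Aᴴ * B) := by
  simp only [dotc2, Matrix.trace, Matrix.diag, Matrix.mul_apply, Matrix.conjTranspose_apply,
    Fintype.sum_prod_type]
  rw [Finset.sum_comm]; rfl

lemma Zpf_nonneg {n J : ℕ} (G : Fin J → Mat n) (hG : ∀ j, (G j).IsHermitian) (θ : Fin J → ℝ) :
    0 ≤ Zpf G θ := by
  have hGm : (Gm G θ).IsHermitian := herm_lin G hG θ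
  have hA : (NormedSpace.exp (-((1/2 : ℂ) • Gm G θ))).IsHermitian := by
    apply Matrix.IsHermitian.exp
    unfold Matrix.IsHermitian
    rw [Matrix.conjTranspose_neg, Matrix.conjTranspose_smul, hGm.eq]
    norm_num
  set A := NormedSpace.exp (-((1/2 : ℂ) • Gm G θ)) with hAdef
  have hsplit : NormedSpace.exp (-(Gm G θ)) = A * A := by
    rw [hAdef, ← Matrix.exp_add_of_commute _ _ ((Commute.refl ((1/2 : ℂ) • Gm G θ)).neg_left.neg_right)]
    congr 1
    module
  rw [Zpf, hsplit]
  have : A * A = Aᴴ * A := by rw [hA.eq]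
  rw [this, Matrix.trace, Complex.re_sum]
  apply Finset.sum_nonneg
  intro x _
  simp only [Matrix.diag_apply, Matrix.mul_apply, Matrix.conjTranspose_apply]
  rw [Complex.re_sum]
  apply Finset.sum_nonneg
  intro y _
  have : star (A y x) * A y x = ((Complex.normSq (A y x) : ℝ) : ℂ) := by
    rw [Complex.normSq_eq_conj_mul_self]; rfl
  rw [this]
  simpa using Complex.normSq_nonneg (A y x)

lemma uH'_mul_uH {n K : ℕ} (H : Fin K → Mat n) (φ : Fin K → ℝ) :
    uH' H φ * uH H φ = 1 := by
  rw [uH, uH', ← Matrix.exp_add_of_commute _ _ (Commute.refl (Complex.I • Hm H φ)).neg_right, add_neg_cancel,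
    NormedSpace.exp_zero]

lemma uH_mul_uH' {n K : ℕ} (H : Fin K → Mat n) (φ : Fin K → ℝ) :
    uH H φ * uH' H φ = 1 := by
  rw [uH, uH', ← Matrix.exp_add_of_commute _ _ (Commute.refl (Complex.I • Hm H φ)).neg_left, neg_add_cancel,
    NormedSpace.exp_zero]

lemma uH_ct {n K : ℕ} (H : Fin K → Mat n) (φ : Fin K → ℝ) (hHm : (Hm H φ).IsHermitian) :
    (uH H φ)ᴴ = uH' H φ := by
  rw [uH, uH', ← neg_smul, exp_smul_ct _ _ hHm]
  congr 1
  simp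

lemma uH'_ct {n K : ℕ} (H : Fin K → Mat n) (φ : Fin K → ℝ) (hHm : (Hm H φ).IsHermitian) :
    (uH' H φ)ᴴ = uH H φ := by
  rw [uH, uH', exp_smul_ct _ _ hHm, Complex.conj_I, neg_smul]

lemma conj_chanΨ {n K : ℕ} (H : Fin K → Mat n) (φ : Fin K → ℝ) (X : Mat n) :
    uH' H φ * chanΨ H φ X * uH H φ = chanΨdag H φ X := by
  set g : ℝ → Mat n := fun s =>
    NormedSpace.exp ((Complex.I * (s:ℂ)) • Hm H φ) * X *
      NormedSpace.exp ((-(Complex.I * (s:ℂ))) • Hm H φ) with hg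
  have point : ∀ t : ℝ,
      uH' H φ * (NormedSpace.exp ((-(Complex.I * (t:ℂ))) • Hm H φ) * X *
        NormedSpace.exp ((Complex.I * (t:ℂ)) • Hm H φ)) * uH H φ = g (1 - t) := by
    intro t
    have e1 : uH' H φ * NormedSpace.exp ((-(Complex.I * (t:ℂ))) • Hm H φ)
        = NormedSpace.exp ((Complex.I * (((1 - t : ℝ)):ℂ)) • Hm H φ) := by
      rw [uH', ← Matrix.exp_add_of_commute _ _
        (((Commute.refl (Hm H φ)).smul_left _).smul_right _)]
      congr 1
      push_cast
      module
    have e2 : NormedSpace.exp ((Complex.I * (t:ℂ)) • Hm H φ) * uH H φ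
        = NormedSpace.exp ((-(Complex.I * (((1 - t : ℝ)):ℂ))) • Hm H φ) := by
      rw [uH, show -(Complex.I • Hm H φ) = (-Complex.I) • Hm H φ from (neg_smul _ _).symm,
        ← Matrix.exp_add_of_commute _ _
          (((Commute.refl (Hm H φ)).smul_left _).smul_right _)]
      congr 1
      push_cast
      module
    calc uH' H φ * (NormedSpace.exp ((-(Complex.I * (t:ℂ))) • Hm H φ) * X *
          NormedSpace.exp ((Complex.I * (t:ℂ)) • Hm H φ)) * uH H φ
        = (uH' H φ * NormedSpace.exp ((-(Complex.I * (t:ℂ))) • Hm H φ)) * X *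
          (NormedSpace.exp ((Complex.I * (t:ℂ)) • Hm H φ) * uH H φ) := by noncomm_ring
      _ = g (1 - t) := by rw [e1, e2, hg]
  rw [chanΨ, mul_intervalIntegral_mul (uH' H φ) (uH H φ) (uH H φ) (uH' H φ)
    (uH_mul_uH' H φ) (uH'_mul_uH H φ) (uH_mul_uH' H φ) (uH'_mul_uH H φ)]
  have : (∫ t in (0:ℝ)..1,
      uH' H φ * (NormedSpace.exp ((-(Complex.I * (t:ℂ))) • Hm H φ) * X *
        NormedSpace.exp ((Complex.I * (t:ℂ)) • Hm H φ)) * uH H φ)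
      = ∫ t in (0:ℝ)..1, g (1 - t) := by
    apply intervalIntegral.integral_congr
    intro t _
    exact point t
  rw [this, intervalIntegral.integral_comp_sub_left g 1]
  norm_num [chanΨdag, hg]

/-- Wigner–Yanase information matrix elements of the evolved quantum Boltzmann machine with
respect to mixed `θ` and `φ` parameters:
`I^WY_{ij}(θ,φ) = i⟨[Φ_{θ/2}(G_j), Ψ_φ†(H_i)]⟩_{ρ(θ)}`. -/
theorem stmt15 {n J K : ℕ} (hn : 1 ≤ n) (hJ : 1 ≤ J) (hK : 1 ≤ K)
    (G : Fin J → Mat n) (H : Fin K → Mat n)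
    (hG : ∀ j, (G j).IsHermitian) (hH : ∀ k, (H k).IsHermitian)
    (θ : Fin J → ℝ) (φ : Fin K → ℝ)
    (i : Fin K) (j : Fin J) :
    ((4 * (dotc2 (Qφ G H θ φ i) (Qθ G H θ φ j)
        - dotc2 (Qφ G H θ φ i) (ψv G H θ φ) * dotc2 (ψv G H θ φ) (Qθ G H θ φ j)).re : ℝ) : ℂ)
      = Complex.I *
          Matrix.trace ((chanΦhalf G θ (G j) * chanΨdag H φ (H i)
            - chanΨdag H φ (H i) * chanΦhalf G θ (G j)) * qbm G θ) := by
  classical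
  have hGm : (Gm G θ).IsHermitian := herm_lin G hG θ
  have hHm : (Hm H φ).IsHermitian := herm_lin H hH φ
  set U := uH H φ with hUdef
  set U' := uH' H φ with hU'def
  set S := sqrtρ G θ with hSdef
  set Φm := chanΦhalf G θ (G j) with hΦdef
  set Ψm := chanΨ H φ (H i) with hΨdef
  set Ψd := chanΨdag H φ (H i) with hΨddef
  set ρm := qbm G θ with hρdef
  set W := sqrtω G H θ φ with hWdef
  have hWeq : W = U * S * U' := rfl
  have hUU' : U * U' = 1 := uH_mul_uH' H φ
  have hU'U : U' * U = 1 := uH'_mul_uH H φ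
  have hUct : Uᴴ = U' := uH_ct H φ hHm
  have hU'ct : U'ᴴ = U := uH'_ct H φ hHm
  have hS : Sᴴ = S := by
    rw [hSdef, sqrtρ, Matrix.conjTranspose_smul]
    congr 1
    · simp
    · rw [show -((1/2:ℂ) • Gm G θ) = (-(1/2):ℂ) • Gm G θ by module, exp_smul_ct _ _ hGm,
        show (starRingEnd ℂ) (-(1/2):ℂ) = -(1/2) by simp [Complex.ext_iff]]
  have hW : Wᴴ = W := by
    rw [hWeq, Matrix.conjTranspose_mul, Matrix.conjTranspose_mul, hUct, hU'ct, hS]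
    noncomm_ring
  have hρ : ρmᴴ = ρm := by
    rw [hρdef, qbm, Matrix.conjTranspose_smul]
    congr 1
    · simp
    · rw [show -(Gm G θ) = (-1:ℂ) • Gm G θ by module, exp_smul_ct _ _ hGm,
        show (starRingEnd ℂ) (-1:ℂ) = -1 by simp]
  have hSS : S * S = ρm := by
    rw [hSdef, hρdef, sqrtρ, qbm, Matrix.smul_mul, Matrix.mul_smul, smul_smul]
    have hEE : NormedSpace.exp (-((1/2:ℂ) • Gm G θ)) * NormedSpace.exp (-((1/2:ℂ) • Gm G θ))
        = NormedSpace.exp (-(Gm G θ)) := by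
      rw [← Matrix.exp_add_of_commute _ _ ((Commute.refl ((1/2:ℂ) • Gm G θ)).neg_left.neg_right)]
      congr 1
      module
    rw [hEE]
    congr 1
    rw [← mul_inv]
    congr 1
    rw [← Complex.ofReal_mul, Real.mul_self_sqrt (Zpf_nonneg G hG θ)]
  have hΦ : Φmᴴ = Φm := herm_chanΦ G θ (G j) hGm (hG j)
  have hΨ : Ψmᴴ = Ψm := herm_chanΨ H φ (H i) hHm (hH i)
  have hΨdH : Ψdᴴ = Ψd := herm_chanΨdag H φ (H i) hHm (hH i)
  have hconj : U' * Ψm * U = Ψd := conj_chanΨ H φ (H i)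
  have hΨr : Ψm = U * Ψd * U' := by
    rw [← hconj]
    calc Ψm = (U * U') * Ψm * (U * U') := by rw [hUU']; simp
      _ = U * (U' * Ψm * U) * U' := by noncomm_ring
  have conj_mul : ∀ M N : Mat n, (U*M*U') * (U*N*U') = U*(M*N)*U' := by
    intro M N
    have h2 : ∀ N : Mat n, U' * (U * N) = N := fun N => by rw [← mul_assoc, hU'U, one_mul]
    simp only [mul_assoc, h2]
  have trace_conj : ∀ M : Mat n, Matrix.trace (U*M*U') = Matrix.trace M := by
    intro M
    rw [Matrix.trace_mul_cycle, hU'U, one_mul]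
  set Mφ := Complex.I • (W * Ψm - Ψm * W) with hMφdef
  set c := (1/2 : ℂ) * Matrix.trace (G j * ρm) with hcdef
  set D := U * (Φm * S + S * Φm) * U' with hDdef
  set Mθ := c • W - (1/4:ℂ) • D with hMθdef
  have eψ : ψv G H θ φ = fun ab => W ab.1 ab.2 := by
    rw [ψv, ← hWdef, vecΓ]
  have eφ : Qφ G H θ φ i = fun ab => Mφ ab.1 ab.2 := by
    rw [Qφ, ← hWdef, ← hΨdef, vecΓ, hMφdef]
    funext ab
    simp
  have eθ : Qθ G H θ φ j = fun ab => Mθ ab.1 ab.2 := by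
    rw [Qθ, ← hρdef, ← hUdef, ← hU'def, ← hΦdef, ← hSdef, vecΓ, eψ, hMθdef, hcdef, hDdef]
    funext ab
    simp [Matrix.sub_apply]
  rw [eφ, eθ, eψ, dot_eq_trace, dot_eq_trace, dot_eq_trace]
  have hMφH : Mφᴴ = Mφ := by
    rw [hMφdef, Matrix.conjTranspose_smul, Matrix.conjTranspose_sub, Matrix.conjTranspose_mul,
      Matrix.conjTranspose_mul, hW, hΨ]
    simp only [Complex.star_def, Complex.conj_I]
    module
  have hzero : Matrix.trace (Mφ * W) = 0 := by
    rw [hMφdef, Matrix.smul_mul, Matrix.trace_smul, Matrix.sub_mul, Matrix.trace_sub]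
    have h1 : Matrix.trace (W*Ψm*W) = Matrix.trace (Ψm*W*W) := by
      calc Matrix.trace (W*Ψm*W) = Matrix.trace (W*(Ψm*W)) := by rw [mul_assoc]
        _ = Matrix.trace ((Ψm*W)*W) := Matrix.trace_mul_comm _ _
    rw [h1]
    simp
  have rot : ∀ A B : Mat n, Matrix.trace (A*B) = Matrix.trace (B*A) :=
    fun A B => Matrix.trace_mul_comm A B
  have expand : Matrix.trace ((S*Ψd - Ψd*S) * (Φm*S + S*Φm))
      = Matrix.trace ((Ψd*Φm - Φm*Ψd) * (S*S)) := by
    have h1 : Matrix.trace (S*Ψd*(Φm*S)) = Matrix.trace (Ψd*Φm*(S*S)) := by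
      calc Matrix.trace (S*Ψd*(Φm*S)) = Matrix.trace (S*(Ψd*(Φm*S))) := by rw [mul_assoc]
        _ = Matrix.trace ((Ψd*(Φm*S))*S) := rot _ _
        _ = Matrix.trace (Ψd*Φm*(S*S)) := by congr 1; noncomm_ring
    have h2 : Matrix.trace (S*Ψd*(S*Φm)) = Matrix.trace (Ψd*(S*(Φm*S))) := by
      calc Matrix.trace (S*Ψd*(S*Φm)) = Matrix.trace (S*(Ψd*(S*Φm))) := by rw [mul_assoc]
        _ = Matrix.trace ((Ψd*(S*Φm))*S) := rot _ _
        _ = Matrix.trace (Ψd*(S*(Φm*S))) := by congr 1; noncomm_ring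
    have h3 : Matrix.trace (Ψd*S*(Φm*S)) = Matrix.trace (Ψd*(S*(Φm*S))) := by
      congr 1; noncomm_ring
    have h4 : Matrix.trace (Ψd*S*(S*Φm)) = Matrix.trace (Φm*Ψd*(S*S)) := by
      calc Matrix.trace (Ψd*S*(S*Φm)) = Matrix.trace ((Ψd*(S*S))*Φm) := by congr 1; noncomm_ring
        _ = Matrix.trace (Φm*(Ψd*(S*S))) := rot _ _
        _ = Matrix.trace (Φm*Ψd*(S*S)) := by congr 1; noncomm_ring
    rw [Matrix.sub_mul, Matrix.mul_add, Matrix.mul_add, Matrix.sub_mul,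
      Matrix.trace_sub, Matrix.trace_add, Matrix.trace_add, Matrix.trace_sub]
    linear_combination h1 + h2 - h3 - h4
  have hCD : Matrix.trace ((W*Ψm - Ψm*W) * D)
      = -(Matrix.trace ((Φm*Ψd - Ψd*Φm) * ρm)) := by
    have hC : W*Ψm - Ψm*W = U*(S*Ψd - Ψd*S)*U' := by
      rw [hΨr, hWeq, conj_mul, conj_mul, ← Matrix.sub_mul, ← Matrix.mul_sub]
    rw [hC, hDdef, conj_mul, trace_conj, expand, hSS,
      Matrix.sub_mul, Matrix.sub_mul, Matrix.trace_sub, Matrix.trace_sub]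
    ring
  have hMφD : Matrix.trace (Mφ * D)
      = Complex.I * (-(Matrix.trace ((Φm*Ψd - Ψd*Φm) * ρm))) := by
    rw [hMφdef, Matrix.smul_mul, Matrix.trace_smul, hCD, smul_eq_mul]
  have hMφMθ : Matrix.trace (Mφ * Mθ)
      = (1/4:ℂ) * (Complex.I * Matrix.trace ((Φm*Ψd - Ψd*Φm) * ρm)) := by
    rw [hMθdef, Matrix.mul_sub, Matrix.trace_sub, Matrix.mul_smul, Matrix.trace_smul,
      Matrix.mul_smul, Matrix.trace_smul, hzero, hMφD, smul_eq_mul, smul_eq_mul]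
    ring
  rw [hMφH, hMφMθ, hzero, zero_mul, sub_zero]
  set T := Matrix.trace ((Φm*Ψd - Ψd*Φm) * ρm) with hTdef
  have hTstar : (starRingEnd ℂ) T = -T := by
    have hXH : ((Φm*Ψd - Ψd*Φm) * ρm)ᴴ = ρm * (Ψd*Φm - Φm*Ψd) := by
      rw [Matrix.conjTranspose_mul, hρ, Matrix.conjTranspose_sub, Matrix.conjTranspose_mul,
        Matrix.conjTranspose_mul, hΦ, hΨdH]
    have h6 := Matrix.trace_conjTranspose ((Φm*Ψd - Ψd*Φm) * ρm)
    rw [hXH] at h6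
    have h7 : Matrix.trace (ρm * (Ψd*Φm - Φm*Ψd)) = -T := by
      rw [rot, hTdef, Matrix.sub_mul, Matrix.sub_mul, Matrix.trace_sub, Matrix.trace_sub]
      ring
    have h8 : star (((Φm*Ψd - Ψd*Φm) * ρm).trace) = -T := by rw [← h6]; exact h7
    exact h8
  have hz : (starRingEnd ℂ) (Complex.I * T) = Complex.I * T := by
    rw [_root_.map_mul, Complex.conj_I, hTstar]
    ring
  have hre : ((Complex.I * T).re : ℂ) = Complex.I * T := Complex.conj_eq_iff_re.mp hz
  have h8 : ((1/4:ℂ) * (Complex.I * T)).re = (1/4 : ℝ) * (Complex.I * T).re := by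
    rw [show (1/4:ℂ) = ((1/4:ℝ):ℂ) by norm_num, Complex.re_ofReal_mul]
  rw [h8, show (4:ℝ) * ((1/4:ℝ) * (Complex.I * T).re) = (Complex.I * T).re by ring]
  exact hre

end
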